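/- Let D = (E, s, t) be a demi-matroid with supplement D̄ = (E, s̄, t̄), s̄(X) = s(E) − s(E−X), t̄(X) = t(E) − t(E−X), and f harmonic of degree d. Then T(D̄, f; x, y) = (−1)^d (x−1)^{s(E)} (y−1)^{t(E)} T(D, f; x/(x−1), y/(y−1)). -/

import Mathlib

open Finset

variable {ι : Type*} [Fintype ι] [DecidableEq ι]

/-- `f` is harmonic of degree `d`. -/
def IsHarmonic (d : ℕ) (f : Finset ι → ℝ) : Prop :=
  ∀ Y : Finset ι, Y.card + 1 = d →
    ∑ Z ∈ Finset.univ.filter (fun Z : Finset ι => Z.card = d ∧ Y ⊆ Z), f Z = 0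

/-- The extension `f̃(X) = ∑_{Z ⊆ X, |Z| = d} f(Z)`. -/
def tilde (d : ℕ) (f : Finset ι → ℝ) (X : Finset ι) : ℝ :=
  ∑ Z ∈ X.powerset.filter (fun Z : Finset ι => Z.card = d), f Z

/-- A demi-matroid on ground set `E = univ` with integer-valued functions. -/
def IsDemimatroidN (s t : Finset ι → ℕ) : Prop :=
  (∀ ⦃X Y : Finset ι⦄, X ⊆ Y →
      (s X ≤ s Y ∧ s Y ≤ Y.card) ∧ (t X ≤ t Y ∧ t Y ≤ Y.card)) ∧
  (∀ X : Finset ι, ((Xᶜ.card : ℤ) - s Xᶜ = (t Finset.univ : ℤ) - t X))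

/-- The harmonic Tutte polynomial
`T(D, f; x, y) = ∑_{X ⊆ E} f̃(X) (x-1)^{s(E)-s(X)} (y-1)^{|X|-s(X)}`
of the demi-matroid whose first function is `s`. -/
def harmTutte (s : Finset ι → ℕ) (d : ℕ) (f : Finset ι → ℝ) (x y : ℝ) : ℝ :=
  ∑ X : Finset ι,
    tilde d f X * (x - 1) ^ (s Finset.univ - s X) * (y - 1) ^ (X.card - s X)

lemma card_filter_between (d : ℕ) (W Z : Finset ι) (hWZ : W ⊆ Z) (hZ : Z.card = d)
    (hW : W.card < d) :
    (Finset.univ.filter (fun Y : Finset ι => (Y.card + 1 = d ∧ W ⊆ Y) ∧ Y ⊆ Z)).card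
      = d - W.card := by
  rw [← hZ, ← Finset.card_sdiff_of_subset hWZ, hZ]
  symm
  apply Finset.card_bij (fun a _ => Z.erase a)
  · intro a ha
    simp only [Finset.mem_sdiff] at ha
    simp only [Finset.mem_filter, Finset.mem_univ, true_and]
    refine ⟨⟨?_, Finset.subset_erase.2 ⟨hWZ, ha.2⟩⟩, Finset.erase_subset _ _⟩
    rw [Finset.card_erase_of_mem ha.1, hZ]
    omega
  · intro a ha b hb hab
    exact Finset.erase_injOn Z (Finset.mem_sdiff.1 ha).1 (Finset.mem_sdiff.1 hb).1 hab
  · intro Y hY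
    simp only [Finset.mem_filter, Finset.mem_univ, true_and] at hY
    obtain ⟨⟨hYc, hWY⟩, hYZ⟩ := hY
    have hss : Y ⊂ Z := hYZ.ssubset_of_ne (by rintro rfl; omega)
    obtain ⟨a, haZ, haY⟩ := Finset.exists_of_ssubset hss
    refine ⟨a, Finset.mem_sdiff.2 ⟨haZ, fun h => haY (hWY h)⟩, ?_⟩
    refine (Finset.eq_of_subset_of_card_le (Finset.subset_erase.2 ⟨hYZ, haY⟩) ?_).symm
    rw [Finset.card_erase_of_mem haZ, hZ]
    omega

lemma gsum_lt (d : ℕ) (f : Finset ι → ℝ) (hf : IsHarmonic d f) (W : Finset ι)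
    (hW : W.card < d) :
    ∑ Z ∈ Finset.univ.filter (fun Z : Finset ι => Z.card = d ∧ W ⊆ Z), f Z = 0 := by
  have h0 : ∑ Y ∈ Finset.univ.filter (fun Y : Finset ι => Y.card + 1 = d ∧ W ⊆ Y),
      (∑ Z ∈ Finset.univ.filter (fun Z : Finset ι => Z.card = d ∧ Y ⊆ Z), f Z) = 0 :=
    Finset.sum_eq_zero fun Y hY => hf Y (Finset.mem_filter.1 hY).2.1
  have hcomm := Finset.sum_comm'
    (s := Finset.univ.filter (fun Y : Finset ι => Y.card + 1 = d ∧ W ⊆ Y))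
    (t := fun Y => Finset.univ.filter (fun Z : Finset ι => Z.card = d ∧ Y ⊆ Z))
    (t' := Finset.univ.filter (fun Z : Finset ι => Z.card = d ∧ W ⊆ Z))
    (s' := fun Z => Finset.univ.filter (fun Y : Finset ι => (Y.card + 1 = d ∧ W ⊆ Y) ∧ Y ⊆ Z))
    (f := fun _ Z => f Z) ?_
  · rw [hcomm] at h0
    have h1 : ∑ Z ∈ Finset.univ.filter (fun Z : Finset ι => Z.card = d ∧ W ⊆ Z),
        ((d - W.card : ℕ) : ℝ) * f Z = 0 := by
      rw [← h0]
      refine Finset.sum_congr rfl fun Z hZ => ?_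
      obtain ⟨hZd, hWZ⟩ := (Finset.mem_filter.1 hZ).2
      rw [Finset.sum_const, card_filter_between d W Z hWZ hZd hW, nsmul_eq_mul]
    rw [← Finset.mul_sum] at h1
    have hne : ((d - W.card : ℕ) : ℝ) ≠ 0 := by
      simp only [ne_eq, Nat.cast_eq_zero]
      omega
    exact (mul_eq_zero.1 h1).resolve_left hne
  · intro Y Z
    simp only [Finset.mem_filter, Finset.mem_univ, true_and]
    constructor
    · rintro ⟨⟨h1, h2⟩, h3, h4⟩
      exact ⟨⟨⟨h1, h2⟩, h4⟩, h3, h2.trans h4⟩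
    · rintro ⟨⟨⟨h1, h2⟩, h4⟩, h3, _⟩
      exact ⟨⟨h1, h2⟩, h3, h4⟩

lemma gsum_eq (d : ℕ) (f : Finset ι → ℝ) (W : Finset ι) (hW : W.card = d) :
    ∑ Z ∈ Finset.univ.filter (fun Z : Finset ι => Z.card = d ∧ W ⊆ Z), f Z = f W := by
  have h : Finset.univ.filter (fun Z : Finset ι => Z.card = d ∧ W ⊆ Z) = {W} := by
    ext Z
    simp only [Finset.mem_filter, Finset.mem_univ, true_and, Finset.mem_singleton]
    constructor
    · rintro ⟨h1, h2⟩
      exact (Finset.eq_of_subset_of_card_le h2 (by omega)).symm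
    · rintro rfl; exact ⟨hW, Finset.Subset.refl _⟩
  rw [h, Finset.sum_singleton]

lemma tilde_compl (d : ℕ) (f : Finset ι → ℝ) (hf : IsHarmonic d f) (X : Finset ι) :
    tilde d f Xᶜ = (-1 : ℝ) ^ d * tilde d f X := by
  have key : ∑ W ∈ X.powerset, (-1 : ℝ) ^ W.card *
      (∑ Z ∈ Finset.univ.filter (fun Z : Finset ι => Z.card = d ∧ W ⊆ Z), f Z)
      = tilde d f Xᶜ := by
    have hcomm := Finset.sum_comm'
      (s := X.powerset)
      (t := fun W => Finset.univ.filter (fun Z : Finset ι => Z.card = d ∧ W ⊆ Z))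
      (t' := Finset.univ.filter (fun Z : Finset ι => Z.card = d))
      (s' := fun Z => (X ∩ Z).powerset)
      (f := fun W Z => (-1 : ℝ) ^ W.card * f Z) ?_
    · simp only [Finset.mul_sum]
      rw [hcomm]
      have hstep : ∀ Z ∈ Finset.univ.filter (fun Z : Finset ι => Z.card = d),
          ∑ W ∈ (X ∩ Z).powerset, (-1 : ℝ) ^ W.card * f Z
            = if X ∩ Z = ∅ then f Z else 0 := by
        intro Z _
        rw [← Finset.sum_mul]
        have hc : ∑ W ∈ (X ∩ Z).powerset, (-1 : ℝ) ^ W.card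
            = if X ∩ Z = ∅ then (1 : ℝ) else 0 := by
          calc ∑ W ∈ (X ∩ Z).powerset, (-1 : ℝ) ^ W.card
              = ((∑ W ∈ (X ∩ Z).powerset, (-1 : ℤ) ^ W.card : ℤ) : ℝ) := by
                push_cast; rfl
            _ = _ := by rw [Finset.sum_powerset_neg_one_pow_card]; split <;> norm_num
        rw [hc]
        split <;> simp
      rw [Finset.sum_congr rfl hstep, ← Finset.sum_filter, Finset.filter_filter]
      unfold tilde
      congr 1
      ext Z
      simp only [Finset.mem_filter, Finset.mem_powerset, Finset.mem_univ, true_and]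
      rw [← Finset.disjoint_iff_inter_eq_empty]
      constructor
      · rintro ⟨h1, h2⟩
        refine ⟨fun a ha => Finset.mem_compl.2 fun hX => ?_, h1⟩
        exact (Finset.disjoint_left.1 h2 hX) ha
      · rintro ⟨h1, h2⟩
        exact ⟨h2, Finset.disjoint_left.2 fun a ha haZ => (Finset.mem_compl.1 (h1 haZ)) ha⟩
    · intro W Z
      simp only [Finset.mem_powerset, Finset.mem_filter, Finset.mem_univ, true_and,
        Finset.subset_inter_iff]
      tauto
  rw [← key]
  have hfilter : ∑ W ∈ X.powerset, (-1 : ℝ) ^ W.card *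
      (∑ Z ∈ Finset.univ.filter (fun Z : Finset ι => Z.card = d ∧ W ⊆ Z), f Z)
      = ∑ W ∈ X.powerset.filter (fun W : Finset ι => W.card = d), (-1 : ℝ) ^ W.card *
      (∑ Z ∈ Finset.univ.filter (fun Z : Finset ι => Z.card = d ∧ W ⊆ Z), f Z) := by
    symm
    apply Finset.sum_filter_of_ne
    intro W _ hne
    by_contra hcard
    apply hne
    rcases lt_or_gt_of_ne hcard with h | h
    · rw [gsum_lt d f hf W h, mul_zero]
    · have hempty : Finset.univ.filter (fun Z : Finset ι => Z.card = d ∧ W ⊆ Z) = ∅ := by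
        apply Finset.filter_false_of_mem
        rintro Z - ⟨hZd, hWZ⟩
        exact absurd (Finset.card_le_card hWZ) (by omega)
      rw [hempty, Finset.sum_empty, mul_zero]
  rw [hfilter]
  unfold tilde
  rw [Finset.mul_sum]
  refine Finset.sum_congr rfl fun W hW => ?_
  obtain ⟨-, hWd⟩ := Finset.mem_filter.1 hW
  rw [gsum_eq d f W hWd, hWd]

/-- `T(D̄, f; x, y) = (-1)^d (x-1)^{s(E)} (y-1)^{t(E)} T(D, f; x/(x-1), y/(y-1))`,
where `D̄ = (E, s̄, t̄)` with `s̄(X) = s(E) - s(E-X)`, as an identity of rational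
functions (i.e. for all `x ≠ 1`, `y ≠ 1`). -/
theorem stmt_14 (s t : Finset ι → ℕ) (hD : IsDemimatroidN s t)
    (d : ℕ) (f : Finset ι → ℝ) (hf : IsHarmonic d f) (x y : ℝ) (hx : x ≠ 1) (hy : y ≠ 1) :
    harmTutte (fun X => s Finset.univ - s Xᶜ) d f x y
      = (-1 : ℝ) ^ d * (x - 1) ^ (s Finset.univ) * (y - 1) ^ (t Finset.univ) *
          harmTutte s d f (x / (x - 1)) (y / (y - 1)) := by
  obtain ⟨hmono, hcompl⟩ := hD
  have ha : x - 1 ≠ 0 := sub_ne_zero.2 hx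
  have hb : y - 1 ≠ 0 := sub_ne_zero.2 hy
  have hs0 : s (∅ : Finset ι) = 0 :=
    Nat.le_zero.1 (le_trans (hmono (Finset.Subset.refl ∅)).1.2 (by simp))
  have ht0 : t (∅ : Finset ι) = 0 :=
    Nat.le_zero.1 (le_trans (hmono (Finset.Subset.refl ∅)).2.2 (by simp))
  have hu : x / (x - 1) - 1 = (x - 1)⁻¹ := by field_simp; ring
  have hv : y / (y - 1) - 1 = (y - 1)⁻¹ := by field_simp; ring
  have key : ∀ (T : ℝ) (k1 j1 k2 j2 : ℕ),
      (-1:ℝ)^d * (x-1)^(k1+j1) * (y-1)^(k2+j2) *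
        ((-1:ℝ)^d * T * ((x-1)⁻¹)^j1 * ((y-1)⁻¹)^j2)
      = T * (x-1)^k1 * (y-1)^k2 := by
    intro T k1 j1 k2 j2
    have hdd : (-1:ℝ)^d * (-1:ℝ)^d = 1 := by
      rw [← pow_add, ← two_mul, pow_mul]; norm_num
    rw [pow_add, pow_add, inv_pow, inv_pow]
    have h1 : (x-1)^j1 ≠ 0 := pow_ne_zero _ ha
    have h2 : (y-1)^j2 ≠ 0 := pow_ne_zero _ hb
    field_simp
    linear_combination T * hdd
  simp only [harmTutte]
  rw [Finset.mul_sum]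
  refine Fintype.sum_bijective (·ᶜ)
    (Function.Involutive.bijective fun X : Finset ι => compl_compl X) _ _ ?_
  intro X
  have hXc_le : s Xᶜ ≤ s Finset.univ := (hmono (Finset.subset_univ Xᶜ)).1.1
  have hXc_card : s Xᶜ ≤ Xᶜ.card := (hmono (Finset.Subset.refl Xᶜ)).1.2
  have htX : t X ≤ t Finset.univ := (hmono (Finset.subset_univ X)).2.1
  have h1 := hcompl X
  have h3 := hcompl (∅ : Finset ι)
  rw [Finset.compl_empty] at h3
  have hcard := Finset.card_add_card_compl X
  have hcardu : (Finset.univ : Finset ι).card = Fintype.card ι := Finset.card_univ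
  have huc : (Finset.univ : Finset ι)ᶜ = ∅ := Finset.compl_univ
  have E1 : (s Finset.univ - s (Finset.univ : Finset ι)ᶜ) - (s Finset.univ - s Xᶜ)
      = s Xᶜ := by
    rw [huc, hs0]; omega
  have E2 : X.card - (s Finset.univ - s Xᶜ) = t X := by omega
  have E3 : s Finset.univ = s Xᶜ + (s Finset.univ - s Xᶜ) := by omega
  have E4 : t Finset.univ = t X + (Xᶜ.card - s Xᶜ) := by omega
  rw [E1, E2, tilde_compl d f hf X, hu, hv,
    show (x-1)^(s Finset.univ) = (x-1)^(s Xᶜ + (s Finset.univ - s Xᶜ)) from by rw [← E3],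
    show (y-1)^(t Finset.univ) = (y-1)^(t X + (Xᶜ.card - s Xᶜ)) from by rw [← E4]]
  exact (key (tilde d f X) (s Xᶜ) (s Finset.univ - s Xᶜ) (t X) (Xᶜ.card - s Xᶜ)).symm
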